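/- For all integers d ≥ 0 and r ≥ 1, any (d+1)(r-1)+1 points in ℝ^d can be partitioned into r pairwise disjoint sets A₁, …, A_r such that the convex hulls of A₁, …, A_r have a common point. -/

import Mathlib

open Finset RealInnerProductSpace Module
-- extraction lemma
theorem exists_fin_weights {E : Type} [AddCommGroup E] [Module ℝ E] {n : ℕ} (g : Fin n → E)
    {x : E} (hx : x ∈ convexHull ℝ (Set.range g)) :
    ∃ μ : Fin n → ℝ, (∀ i, 0 ≤ μ i) ∧ ∑ i, μ i = 1 ∧ ∑ i, μ i • g i = x := by
  have hne : Nonempty (Fin n) := by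
    rcases Set.eq_empty_or_nonempty (Set.range g) with h | h
    · rw [h, convexHull_empty] at hx; exact absurd hx (Set.notMem_empty x)
    · exact Set.range_nonempty_iff_nonempty.1 h
  inhabit Fin n
  rw [_root_.convexHull_eq] at hx
  obtain ⟨ι, t, w, z, hw0, hw1, hz, hc⟩ := hx
  choose σ hσ using fun i (h : z i ∈ Set.range g) => h
  classical
  set τ : ι → Fin n := fun i => if h : z i ∈ Set.range g then σ i h else default with hτ
  refine ⟨fun k => ∑ i ∈ t.filter (fun i => τ i = k), w i, ?_, ?_, ?_⟩
  · intro k; exact Finset.sum_nonneg fun i hi => hw0 i (Finset.mem_filter.1 hi).1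
  · rw [Finset.sum_fiberwise t τ w, hw1]
  · rw [Finset.centerMass, hw1, inv_one, one_smul] at hc
    rw [← hc]
    rw [← Finset.sum_fiberwise t τ (fun i => w i • z i)]
    refine Finset.sum_congr rfl fun k _ => ?_
    rw [Finset.sum_smul]
    refine Finset.sum_congr rfl fun i hi => ?_
    obtain ⟨hit, hik⟩ := Finset.mem_filter.1 hi
    have hz' : z i ∈ Set.range g := hz i hit
    have : g (τ i) = z i := by rw [hτ]; simp only [dif_pos hz']; exact hσ i hz'
    rw [← hik, this]
open Finset RealInnerProductSpace

theorem min_norm_inner {E : Type} [NormedAddCommGroup E] [InnerProductSpace ℝ E]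
    {K : Set E} (hK : Convex ℝ K) {z : E} (hz : z ∈ K)
    (hmin : ∀ w ∈ K, ‖z‖ ≤ ‖w‖) {w : E} (hw : w ∈ K) : ‖z‖ ^ 2 ≤ ⟪z, w⟫ := by
  by_contra hlt
  push_neg at hlt
  have hc : ⟪z, w - z⟫ < 0 := by
    rw [inner_sub_right, real_inner_self_eq_norm_sq]; linarith
  have hwz : w - z ≠ 0 := by
    intro h; rw [h, inner_zero_right] at hc; exact lt_irrefl 0 hc
  have hnorm : (0:ℝ) < ‖w - z‖ ^ 2 := pow_pos (norm_pos_iff.2 hwz) 2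
  set t : ℝ := min 1 (-⟪z, w - z⟫ / ‖w - z‖ ^ 2) with ht
  have ht0 : 0 < t := lt_min one_pos (div_pos (by linarith) hnorm)
  have ht1 : t ≤ 1 := min_le_left _ _
  have htle : t * ‖w - z‖ ^ 2 ≤ -⟪z, w - z⟫ := by
    have := min_le_right 1 (-⟪z, w - z⟫ / ‖w - z‖ ^ 2)
    calc t * ‖w - z‖ ^ 2 ≤ (-⟪z, w - z⟫ / ‖w - z‖ ^ 2) * ‖w - z‖ ^ 2 := by
          exact mul_le_mul_of_nonneg_right this (le_of_lt hnorm)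
      _ = -⟪z, w - z⟫ := by field_simp
  have hmem : z + t • (w - z) ∈ K := by
    have := hK hz hw (by linarith : (0:ℝ) ≤ 1 - t) ht0.le (by ring)
    convert this using 1
    module
  have hle := hmin _ hmem
  have hsq : ‖z‖ ^ 2 ≤ ‖z + t • (w - z)‖ ^ 2 := by
    have h := hle
    nlinarith [norm_nonneg z, norm_nonneg (z + t • (w - z))]
  rw [norm_add_sq_real, real_inner_smul_right, norm_smul] at hsq
  rw [Real.norm_eq_abs, abs_of_pos ht0] at hsq
  nlinarith [hc, ht0, htle]

theorem exists_neg_inner {E : Type} [NormedAddCommGroup E] [InnerProductSpace ℝ E]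
    {z : E} (X : Finset E) (hX : (0:E) ∈ convexHull ℝ (X : Set E)) :
    ∃ x ∈ X, ⟪z, x⟫ ≤ 0 := by
  classical
  by_contra h
  push_neg at h
  rw [Finset.convexHull_eq] at hX
  obtain ⟨w, hw0, hw1, hc⟩ := hX
  rw [Finset.centerMass_eq_of_sum_1 _ _ hw1] at hc
  have h0 : (0:ℝ) = ∑ y ∈ X, w y * ⟪z, y⟫ := by
    have := congrArg (fun u => ⟪z, u⟫) hc
    simpa [inner_sum, real_inner_smul_right] using this.symm
  have hzero : ∀ y ∈ X, w y * ⟪z, y⟫ = 0 := by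
    rw [← Finset.sum_eq_zero_iff_of_nonneg]
    · exact h0.symm
    · intro y hy
      exact mul_nonneg (hw0 y hy) (le_of_lt (h y hy))
  have : ∀ y ∈ X, w y = 0 := fun y hy => by
    have := hzero y hy
    rcases mul_eq_zero.1 this with h' | h'
    · exact h'
    · exact absurd h' (ne_of_gt (h y hy))
  rw [Finset.sum_eq_zero this] at hw1
  exact one_ne_zero hw1.symm

theorem card_le_finrank_of_inner_eq {E : Type} [NormedAddCommGroup E] [InnerProductSpace ℝ E]
    [FiniteDimensional ℝ E] {z : E} (hz : z ≠ 0) {c : ℝ} (t : Finset E)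
    (ht : ∀ y ∈ t, ⟪z, y⟫ = c) (hai : AffineIndependent ℝ ((↑) : ↑t → E))
    (hne : t.Nonempty) : t.card ≤ finrank ℝ E := by
  classical
  have hzz : ⟪z, z⟫ ≠ 0 := by
    simpa [real_inner_self_eq_norm_sq] using pow_ne_zero 2 (norm_ne_zero_iff.2 hz)
  set f : E →ₗ[ℝ] ℝ := (innerSL ℝ z).toLinearMap with hf
  have hsurj : Function.Surjective f := by
    intro r
    refine ⟨(r / ⟪z, z⟫) • z, ?_⟩
    simp [hf, real_inner_smul_right]
    field_simp
  have hrange : LinearMap.range f = ⊤ := LinearMap.range_eq_top.2 hsurj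
  have hker : 1 + finrank ℝ (LinearMap.ker f) = finrank ℝ E := by
    have := LinearMap.finrank_range_add_finrank_ker f
    rwa [hrange, finrank_top, finrank_self] at this
  have hspan : vectorSpan ℝ (↑t : Set E) ≤ LinearMap.ker f := by
    rw [vectorSpan_def, Submodule.span_le]
    rintro x ⟨y1, hy1, y2, hy2, rfl⟩
    simp only [SetLike.mem_coe, LinearMap.mem_ker, vsub_eq_sub, hf]
    simp only [ContinuousLinearMap.coe_coe, innerSL_apply_apply]
    rw [inner_sub_right, ht y1 hy1, ht y2 hy2, sub_self]
  have hcard : Fintype.card ↑t = (t.card - 1) + 1 := by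
    rw [Fintype.card_coe]
    have h1 : 1 ≤ t.card := Finset.card_pos.2 hne
    omega
  have hvs := hai.finrank_vectorSpan hcard
  have hspan' : vectorSpan ℝ (Set.range (Subtype.val : ↑t → E)) ≤ LinearMap.ker f := by
    rw [Subtype.range_coe]; exact hspan
  have hle : finrank ℝ (vectorSpan ℝ (Set.range (Subtype.val : ↑t → E))) ≤
      finrank ℝ (LinearMap.ker f) := Submodule.finrank_mono hspan'
  rw [hvs] at hle
  have h1 : 1 ≤ t.card := Finset.card_pos.2 hne
  omega

theorem colorful_caratheodory {E : Type} [NormedAddCommGroup E] [InnerProductSpace ℝ E]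
    [FiniteDimensional ℝ E] {n : ℕ} (hn : Module.finrank ℝ E < n)
    (X : Fin n → Finset E) (hX : ∀ i, (0:E) ∈ convexHull ℝ ((X i : Set E))) :
    ∃ g : Fin n → E, (∀ i, g i ∈ X i) ∧ (0:E) ∈ convexHull ℝ (Set.range g) := by
  classical
  have hnz : ∀ i, (X i).Nonempty := by
    intro i
    by_contra h
    rw [Finset.not_nonempty_iff_eq_empty] at h
    have := hX i
    rw [h] at this
    simpa using this
  -- minimal norm point of each convex hull
  have hmin : ∀ g : Fin n → E, ∃ z ∈ convexHull ℝ (Set.range g),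
      ∀ y ∈ convexHull ℝ (Set.range g), ‖z‖ ≤ ‖y‖ := by
    intro g
    have hcpt : IsCompact (convexHull ℝ (Set.range g)) :=
      (Set.finite_range g).isCompact_convexHull ℝ
    have hne : (convexHull ℝ (Set.range g)).Nonempty := by
      have : (Set.range g).Nonempty := Set.range_nonempty_iff_nonempty.2 ⟨⟨0, by omega⟩⟩
      exact this.mono (subset_convexHull ℝ _)
    obtain ⟨x, hx, hmin⟩ := hcpt.exists_isMinOn hne continuous_norm.continuousOn
    exact ⟨x, hx, fun y hy => hmin hy⟩
  choose m hmK hmmin using hmin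
  -- minimize over all transversals
  set 𝒯 : Finset (Fin n → E) := Fintype.piFinset X with h𝒯
  have h𝒯ne : 𝒯.Nonempty := ⟨fun i => (hnz i).choose, by
    rw [h𝒯, Fintype.mem_piFinset]; exact fun i => (hnz i).choose_spec⟩
  obtain ⟨g, hg𝒯, hgmin⟩ := 𝒯.exists_min_image (fun g => ‖m g‖) h𝒯ne
  have hg : ∀ i, g i ∈ X i := (Fintype.mem_piFinset).1 hg𝒯
  refine ⟨g, hg, ?_⟩
  set z := m g with hzdef
  rcases eq_or_ne z 0 with hz0 | hz0
  · rw [← hz0]; exact hmK g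
  -- z ≠ 0 : derive a contradiction
  exfalso
  have hz2 : (0:ℝ) < ‖z‖ ^ 2 := pow_pos (norm_pos_iff.2 hz0) 2
  have hvar : ∀ w ∈ convexHull ℝ (Set.range g), ‖z‖ ^ 2 ≤ ⟪z, w⟫ :=
    fun w hw => min_norm_inner (convex_convexHull ℝ _) (hmK g) (hmmin g) hw
  obtain ⟨μ, hμ0, hμ1, hμs⟩ := exists_fin_weights g (hmK g)
  have hgi : ∀ i, ‖z‖ ^ 2 ≤ ⟪z, g i⟫ := fun i =>
    hvar _ (subset_convexHull ℝ _ (Set.mem_range_self i))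
  have hsum : ∑ i, μ i * (⟪z, g i⟫ - ‖z‖ ^ 2) = 0 := by
    have h1 : ⟪z, ∑ i, μ i • g i⟫ = ‖z‖ ^ 2 := by
      rw [hμs, real_inner_self_eq_norm_sq]
    rw [inner_sum] at h1
    simp only [real_inner_smul_right] at h1
    have : ∑ i, μ i * (⟪z, g i⟫ - ‖z‖ ^ 2) =
        (∑ i, μ i * ⟪z, g i⟫) - (∑ i, μ i) * ‖z‖ ^ 2 := by
      simp only [mul_sub]
      rw [Finset.sum_sub_distrib, Finset.sum_mul]
    rw [this, h1, hμ1, one_mul, sub_self]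
  have heq : ∀ i, μ i ≠ 0 → ⟪z, g i⟫ = ‖z‖ ^ 2 := by
    intro i hi
    have hterm : ∀ j ∈ Finset.univ, (0:ℝ) ≤ μ j * (⟪z, g j⟫ - ‖z‖ ^ 2) :=
      fun j _ => mul_nonneg (hμ0 j) (by linarith [hgi j])
    have := (Finset.sum_eq_zero_iff_of_nonneg hterm).1 hsum i (Finset.mem_univ i)
    rcases mul_eq_zero.1 this with h | h
    · exact absurd h hi
    · linarith [hgi i]
  -- z in convex hull of the support points
  set I : Finset (Fin n) := Finset.univ.filter (fun i => μ i ≠ 0) with hI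
  have hμI : ∑ i ∈ I, μ i = 1 := by
    rw [hI, Finset.sum_filter_ne_zero, hμ1]
  have hzI : z ∈ convexHull ℝ (g '' (↑I : Set (Fin n))) := by
    have hsum' : ∑ i ∈ I, μ i • g i = z := by
      show ∑ i ∈ I, μ i • g i = m g
      rw [← hμs]
      exact Finset.sum_filter_of_ne (fun i _ h => by
        intro h0; rw [h0, zero_smul] at h; exact h rfl)
    have hmem := Finset.centerMass_mem_convexHull (s := g '' (↑I : Set (Fin n))) I
      (fun i _ => hμ0 i) (by rw [hμI]; norm_num)
      (fun i hi => Set.mem_image_of_mem g (Finset.mem_coe.2 hi))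
    rwa [Finset.centerMass_eq_of_sum_1 _ _ hμI, hsum'] at hmem
  -- Caratheodory
  rw [convexHull_eq_union] at hzI
  simp only [Set.mem_iUnion] at hzI
  obtain ⟨t, hts, hai, hzt⟩ := hzI
  have htne : t.Nonempty := by
    by_contra h
    rw [Finset.not_nonempty_iff_eq_empty] at h
    rw [h] at hzt
    simpa using hzt
  have hinT : ∀ y ∈ t, ⟪z, y⟫ = ‖z‖ ^ 2 := by
    intro y hy
    obtain ⟨i, hiI, rfl⟩ := hts hy
    refine heq i ?_
    simpa [hI] using hiI
  have hcard : t.card ≤ Module.finrank ℝ E :=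
    card_le_finrank_of_inner_eq hz0 t hinT hai htne
  -- choose indices realizing t
  have hchoice : ∀ y ∈ t, ∃ i, g i = y := by
    intro y hy
    obtain ⟨i, _, rfl⟩ := hts hy
    exact ⟨i, rfl⟩
  choose idx hidx using hchoice
  set s : Finset (Fin n) := t.attach.image (fun y => idx y.1 y.2) with hs
  have hscard : s.card ≤ t.card := Finset.card_image_le.trans (by rw [Finset.card_attach])
  have hsne : ∃ k, k ∉ s := by
    by_contra h
    push_neg at h
    have : s = Finset.univ := Finset.eq_univ_iff_forall.2 h
    have := Finset.card_univ (α := Fin n) ▸ this ▸ hscard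
    simp [Fintype.card_fin] at this
    omega
  obtain ⟨k, hk⟩ := hsne
  have htsub : (↑t : Set E) ⊆ g '' ↑s := by
    intro y hy
    exact ⟨idx y hy, by simp [hs]; exact ⟨y, hy, rfl⟩, hidx y hy⟩
  have hzs : z ∈ convexHull ℝ (g '' ↑s) := convexHull_mono htsub hzt
  -- swap in a point from X k
  obtain ⟨x', hx'X, hx'⟩ := exists_neg_inner (z := z) (X k) (hX k)
  set g' := Function.update g k x' with hg'def
  have hg' : ∀ i, g' i ∈ X i := by
    intro i
    rcases eq_or_ne i k with rfl | h
    · rw [hg'def, Function.update_self]; exact hx'X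
    · rw [hg'def, Function.update_of_ne h]; exact hg i
  have hg'𝒯 : g' ∈ 𝒯 := (Fintype.mem_piFinset).2 hg'
  have hzg' : z ∈ convexHull ℝ (Set.range g') := by
    have hsub : g '' (↑s : Set (Fin n)) ⊆ Set.range g' := by
      rintro y ⟨i, hi, rfl⟩
      have hik : i ≠ k := fun h => hk (h ▸ hi)
      exact ⟨i, by rw [hg'def, Function.update_of_ne hik]⟩
    exact convexHull_mono hsub hzs
  have hx'g' : x' ∈ convexHull ℝ (Set.range g') :=
    subset_convexHull ℝ _ ⟨k, by rw [hg'def, Function.update_self]⟩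
  -- the shorter point
  have hzx' : z ≠ x' := by
    intro h
    rw [← h] at hx'
    rw [real_inner_self_eq_norm_sq] at hx'
    linarith
  set c : ℝ := ⟪z, z - x'⟫ with hc
  have hcpos : 0 < c := by
    rw [hc, inner_sub_right, real_inner_self_eq_norm_sq]
    linarith
  set q : ℝ := ‖z - x'‖ ^ 2 with hq
  have hqpos : 0 < q := pow_pos (norm_pos_iff.2 (sub_ne_zero.2 hzx')) 2
  set τ : ℝ := c / q with hτ
  have hτpos : 0 < τ := div_pos hcpos hqpos
  have hτ1 : τ ≤ 1 := by
    rw [hτ, div_le_one hqpos, hq, hc, inner_sub_right, norm_sub_sq_real,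
      real_inner_self_eq_norm_sq]
    nlinarith [sq_nonneg ‖x'‖, hx']
  set u : E := z + τ • (x' - z) with hu
  have humem : u ∈ convexHull ℝ (Set.range g') := by
    have := (convex_convexHull ℝ (Set.range g')) hzg' hx'g'
      (by linarith : (0:ℝ) ≤ 1 - τ) hτpos.le (by ring)
    convert this using 1
    rw [hu]; module
  have husq : ‖u‖ ^ 2 = ‖z‖ ^ 2 - c ^ 2 / q := by
    rw [hu, norm_add_sq_real, real_inner_smul_right, inner_sub_right, norm_smul,
      Real.norm_eq_abs, abs_of_pos hτpos, mul_pow]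
    have h1 : ⟪z, x'⟫ - ⟪z, z⟫ = -c := by rw [hc, inner_sub_right]; ring
    have h2 : ‖x' - z‖ ^ 2 = q := by rw [hq, norm_sub_rev]
    rw [h2]
    have hτq : τ * q = c := by rw [hτ]; field_simp
    have hdiv : c ^ 2 / q = τ ^ 2 * q := by
      rw [hτ]; field_simp
    rw [h1, hdiv]
    linear_combination (2 * τ) * hτq
  have hult : ‖u‖ < ‖z‖ := by
    have : ‖u‖ ^ 2 < ‖z‖ ^ 2 := by
      rw [husq]
      have : 0 < c ^ 2 / q := div_pos (pow_pos hcpos 2) hqpos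
      linarith
    exact lt_of_pow_lt_pow_left₀ 2 (norm_nonneg z) this
  have h1 : ‖m g'‖ ≤ ‖u‖ := hmmin g' u humem
  have h2 : ‖z‖ ≤ ‖m g'‖ := hgmin g' hg'𝒯
  linarith


-- weighted indicator sum
theorem sum_ind {r : ℕ} (w : Fin r → ℝ) {a : ℕ} (ha : a < r) :
    ∑ j : Fin r, w j * (if (j : ℕ) = a then (1:ℝ) else 0) = w ⟨a, ha⟩ := by
  rw [Finset.sum_eq_single (⟨a, ha⟩ : Fin r)]
  · simp
  · intro j _ hj
    have : (j : ℕ) ≠ a := fun h => hj (Fin.ext h)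
    simp [this]
  · intro h; exact absurd (Finset.mem_univ _) h

theorem vkernel {r : ℕ} (hr : 1 ≤ r) (w : Fin r → ℝ)
    (h : ∀ c : Fin (r - 1), ∑ j : Fin r, w j *
      ((if (j : ℕ) = (c : ℕ) then (1:ℝ) else 0) - (if (j : ℕ) = r - 1 then 1 else 0)) = 0) :
    ∀ j, w j = w ⟨r - 1, by omega⟩ := by
  intro j
  rcases eq_or_ne (j : ℕ) (r - 1) with hj | hj
  · congr 1; exact Fin.ext hj
  · have hjlt : (j : ℕ) < r - 1 := by have := j.isLt; omega
    have hc := h ⟨(j : ℕ), hjlt⟩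
    simp only [mul_sub] at hc
    rw [Finset.sum_sub_distrib, sum_ind w (show (j:ℕ) < r by omega),
      sum_ind w (show r - 1 < r by omega)] at hc
    have : (⟨(j:ℕ), show (j:ℕ) < r by omega⟩ : Fin r) = j := Fin.ext rfl
    rw [this] at hc
    linarith

theorem tverberg (d r : ℕ) (hr : 1 ≤ r) (p : Fin ((d + 1) * (r - 1) + 1) → Fin d → ℝ) :
    ∃ A : Fin r → Finset (Fin ((d + 1) * (r - 1) + 1)),
      (∀ j k, j ≠ k → Disjoint (A j) (A k)) ∧
      (Finset.univ.biUnion A = Finset.univ) ∧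
      ∃ x : Fin d → ℝ, ∀ j, x ∈ convexHull ℝ (p '' ↑(A j)) := by
  classical
  set E := EuclideanSpace ℝ (Fin (d + 1) × Fin (r - 1)) with hE
  have hfr : finrank ℝ E = (d + 1) * (r - 1) := by
    calc finrank ℝ E = Fintype.card (Fin (d + 1) × Fin (r - 1)) := finrank_euclideanSpace
      _ = (d + 1) * (r - 1) := by simp
  set b : Fin ((d + 1) * (r - 1) + 1) → Fin (d + 1) → ℝ := fun i => Fin.snoc (p i) 1 with hb
  set v : Fin r → Fin (r - 1) → ℝ := fun j c =>
    (if (j : ℕ) = (c : ℕ) then (1:ℝ) else 0) - (if (j : ℕ) = r - 1 then 1 else 0) with hv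
  set T : Fin ((d + 1) * (r - 1) + 1) → Fin r → E :=
    fun i j => WithLp.toLp 2 (fun ac : Fin (d + 1) × Fin (r - 1) => b i ac.1 * v j ac.2) with hT
  -- sum of v over j is zero
  have hvsum : ∀ c : Fin (r - 1), ∑ j : Fin r, v j c = 0 := by
    intro c
    have h1 : ∑ j : Fin r, (if (j : ℕ) = (c : ℕ) then (1:ℝ) else 0) = 1 := by
      have := sum_ind (fun _ : Fin r => (1:ℝ)) (show (c : ℕ) < r by have := c.isLt; omega)
      simpa using this
    have h2 : ∑ j : Fin r, (if (j : ℕ) = r - 1 then (1:ℝ) else 0) = 1 := by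
      have := sum_ind (fun _ : Fin r => (1:ℝ)) (show r - 1 < r by omega)
      simpa using this
    rw [hv]
    rw [Finset.sum_sub_distrib, h1, h2, sub_self]
  -- the color classes
  set X : Fin ((d + 1) * (r - 1) + 1) → Finset E :=
    fun i => Finset.univ.image (T i) with hX
  have hrpos : (0:ℝ) < r := by exact_mod_cast hr
  have hX0 : ∀ i, (0:E) ∈ convexHull ℝ ((X i : Set E)) := by
    intro i
    have hs1 : ∑ _j : Fin r, (r:ℝ)⁻¹ = 1 := by
      rw [Finset.sum_const, Finset.card_univ, Fintype.card_fin, nsmul_eq_mul]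
      field_simp
    have hmem := Finset.centerMass_mem_convexHull (s := (X i : Set E)) (Finset.univ : Finset (Fin r))
      (fun j _ => inv_nonneg.2 hrpos.le) (by rw [hs1]; norm_num)
      (fun j _ => by rw [hX]; exact Finset.mem_coe.2 (Finset.mem_image_of_mem _ (Finset.mem_univ j)))
    rw [Finset.centerMass_eq_of_sum_1 _ _ hs1] at hmem
    have hzero : ∑ j : Fin r, (r:ℝ)⁻¹ • T i j = (0:E) := by
      ext ac
      have happ : (∑ j : Fin r, (r:ℝ)⁻¹ • T i j) ac
          = ∑ j : Fin r, (r:ℝ)⁻¹ * (b i ac.1 * v j ac.2) := by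
        rw [WithLp.ofLp_sum, Finset.sum_apply]
        rfl
      rw [happ, show (0:E) ac = 0 from rfl]
      have : ∑ j : Fin r, (r:ℝ)⁻¹ * (b i ac.1 * v j ac.2)
          = (r:ℝ)⁻¹ * b i ac.1 * ∑ j : Fin r, v j ac.2 := by
        rw [Finset.mul_sum]; exact Finset.sum_congr rfl fun j _ => by ring
      rw [this, hvsum ac.2, mul_zero]
    rwa [hzero] at hmem
  -- colorful caratheodory
  obtain ⟨g, hgX, hg0⟩ := colorful_caratheodory (n := (d + 1) * (r - 1) + 1) (by rw [hfr]; omega) X hX0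
  -- choose colors
  have hgX' : ∀ i, ∃ j : Fin r, T i j = g i := by
    intro i
    have := hgX i
    rw [hX] at this
    obtain ⟨j, _, hj⟩ := Finset.mem_image.1 this
    exact ⟨j, hj⟩
  choose jf hjf using hgX'
  obtain ⟨μ, hμ0, hμ1, hμs⟩ := exists_fin_weights g hg0
  -- coordinate equations
  have hcoord : ∀ (a : Fin (d + 1)) (c : Fin (r - 1)),
      ∑ i, μ i * (b i a * v (jf i) c) = 0 := by
    intro a c
    have happ : (∑ i, μ i • g i) (a, c) = ∑ i, μ i * (b i a * v (jf i) c) := by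
      rw [WithLp.ofLp_sum, Finset.sum_apply]
      refine Finset.sum_congr rfl fun i _ => ?_
      rw [← hjf i]
      rfl
    rw [hμs] at happ
    exact happ.symm
  -- fibers
  set A : Fin r → Finset (Fin ((d + 1) * (r - 1) + 1)) :=
    fun j => Finset.univ.filter (fun i => jf i = j) with hA
  set y : Fin r → Fin (d + 1) → ℝ := fun j a => ∑ i ∈ A j, μ i * b i a with hy
  have hyv : ∀ (a : Fin (d + 1)) (c : Fin (r - 1)), ∑ j : Fin r, y j a * v j c = 0 := by
    intro a c
    have hfib := Finset.sum_fiberwise Finset.univ jf (fun i => μ i * (b i a * v (jf i) c))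
    rw [hcoord a c] at hfib
    rw [← hfib]
    refine Finset.sum_congr rfl fun j _ => ?_
    rw [hy, Finset.sum_mul]
    refine Finset.sum_congr rfl fun i hi => ?_
    have : jf i = j := (Finset.mem_filter.1 hi).2
    rw [this]
    ring
  have hlast : r - 1 < r := by omega
  set jlast : Fin r := ⟨r - 1, hlast⟩ with hjlast
  have hkey : ∀ (a : Fin (d + 1)) (j : Fin r), y j a = y jlast a := by
    intro a j
    exact vkernel hr (fun j => y j a) (fun c => hyv a c) j
  -- fiber weight sums are all equal to 1/r
  set σ : ℝ := ∑ i ∈ A jlast, μ i with hσ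
  have hwt : ∀ j : Fin r, ∑ i ∈ A j, μ i = σ := by
    intro j
    have h1 : y j (Fin.last d) = ∑ i ∈ A j, μ i := by
      rw [hy]
      refine Finset.sum_congr rfl fun i _ => ?_
      rw [hb]
      simp [Fin.snoc_last]
    have h2 : y jlast (Fin.last d) = σ := by
      rw [hy, hσ]
      refine Finset.sum_congr rfl fun i _ => ?_
      rw [hb]
      simp [Fin.snoc_last]
    rw [← h1, hkey (Fin.last d) j, h2]
  have htot : ∑ j : Fin r, ∑ i ∈ A j, μ i = 1 := by
    rw [Finset.sum_fiberwise Finset.univ jf (fun i => μ i)]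
    exact hμ1
  have hσr : (r : ℝ) * σ = 1 := by
    rw [← htot]
    rw [Finset.sum_congr rfl (fun j _ => hwt j)]
    rw [Finset.sum_const, Finset.card_univ, Fintype.card_fin, nsmul_eq_mul]
  have hσpos : 0 < σ := by
    by_contra h
    push_neg at h
    nlinarith
  -- the common point
  set x : Fin d → ℝ := fun a => σ⁻¹ * y jlast (Fin.castSucc a) with hxdef
  refine ⟨A, ?_, ?_, x, ?_⟩
  · intro j k hjk
    rw [Finset.disjoint_left]
    intro i hij hik
    rw [hA] at hij hik
    exact hjk ((Finset.mem_filter.1 hij).2 ▸ (Finset.mem_filter.1 hik).2 ▸ rfl)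
  · apply Finset.eq_univ_of_forall
    intro i
    rw [Finset.mem_biUnion]
    exact ⟨jf i, Finset.mem_univ _, by rw [hA]; exact Finset.mem_filter.2 ⟨Finset.mem_univ _, rfl⟩⟩
  · intro j
    have hmem := Finset.centerMass_mem_convexHull (s := p '' (↑(A j) : Set (Fin ((d + 1) * (r - 1) + 1)))) (A j)
      (fun i _ => hμ0 i) (by rw [hwt j]; exact hσpos)
      (fun i hi => Set.mem_image_of_mem p (Finset.mem_coe.2 hi))
    have hcm : (A j).centerMass μ p = x := by
      rw [Finset.centerMass, hwt j]
      funext a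
      have happ : ((A j).sum fun i => μ i • p i) a = ∑ i ∈ A j, μ i * p i a := by
        rw [Finset.sum_apply]
        rfl
      rw [Pi.smul_apply, happ, smul_eq_mul, hxdef]
      have hyj : ∑ i ∈ A j, μ i * p i a = y j (Fin.castSucc a) := by
        rw [hy]
        refine Finset.sum_congr rfl fun i _ => ?_
        rw [hb]
        simp [Fin.snoc_castSucc]
      rw [hyj, hkey (Fin.castSucc a) j]
    rwa [hcm] at hmem
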